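/- Let k be a field of characteristic p > 2, A = k(Z/p)^s with s ≥ 1 acting on k[X,Y] with generators g_i fixing Y and g_i(X) = X - μ_iY for 𝔽_p-linearly independent μ_i ∈ k. Then S^{p^s - 1}(V^#) is a free module of rank 1 over k(Z/p)^s. -/

import Mathlib

open MvPolynomial

/-- The `k`-algebra automorphism of `k[X,Y]` determined by `X ↦ X - cY`, `Y ↦ Y`
(we write `X = X 0`, `Y = X 1`). -/
noncomputable def substAct (k : Type*) [CommRing k] (c : k) :
    MvPolynomial (Fin 2) k →ₐ[k] MvPolynomial (Fin 2) k :=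
  aeval (fun j => if j = 0 then X 0 - C c * X 1 else X 1)

/-- The exponent of the monomial `X^i Y^(N-1-i)`. -/
noncomputable def expMono (N i : ℕ) : Fin 2 →₀ ℕ :=
  Finsupp.single 0 i + Finsupp.single 1 (N - 1 - i)

lemma expMono_apply0 (N i : ℕ) : expMono N i 0 = i := by
  simp [expMono, Finsupp.single_apply]

lemma expMono_apply1 (N i : ℕ) : expMono N i 1 = N - 1 - i := by
  simp [expMono, Finsupp.single_apply]

lemma linearPoly_ne_zero {k : Type*} [Field k] (c : k) :
    (X 0 - C c * X 1 : MvPolynomial (Fin 2) k) ≠ 0 := by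
  intro h
  have := congrArg (coeff (Finsupp.single 0 1)) h
  simp [coeff_X', Finsupp.single_eq_single_iff] at this

/-- In characteristic `p`, `(X - cY)^(p^s - 1) = ∑ c^(p^s-1-i) X^i Y^(p^s-1-i)`. -/
lemma bp_expand {k : Type*} [Field k] (p : ℕ) [Fact p.Prime] [CharP k p] (s : ℕ) (c : k) :
    (X 0 - C c * X 1 : MvPolynomial (Fin 2) k) ^ (p ^ s - 1) =
      ∑ i ∈ Finset.range (p ^ s), monomial (expMono (p ^ s) i) (c ^ (p ^ s - 1 - i)) := by
  have hN : 1 ≤ p ^ s := Nat.one_le_pow _ _ (Fact.out : p.Prime).pos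
  apply mul_right_cancel₀ (linearPoly_ne_zero c)
  rw [← pow_succ, Nat.sub_add_cancel hN]
  have h1 : (X 0 - C c * X 1 : MvPolynomial (Fin 2) k) ^ (p ^ s)
      = X 0 ^ (p ^ s) - (C c * X 1) ^ (p ^ s) := sub_pow_char_pow _ _ s
  rw [h1, ← geom_sum₂_mul (X 0 : MvPolynomial (Fin 2) k) (C c * X 1) (p ^ s)]
  congr 1
  refine Finset.sum_congr rfl fun i _ => ?_
  symm
  calc monomial (expMono (p ^ s) i) (c ^ (p ^ s - 1 - i))
      = monomial (Finsupp.single 0 i) (1 : k)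
          * monomial (Finsupp.single 1 (p ^ s - 1 - i)) (c ^ (p ^ s - 1 - i)) := by
        rw [monomial_mul, one_mul, expMono]
    _ = X 0 ^ i * (C (c ^ (p ^ s - 1 - i)) * X 1 ^ (p ^ s - 1 - i)) := by
        rw [X_pow_eq_monomial, C_mul_X_pow_eq_monomial]
    _ = X 0 ^ i * (C c * X 1) ^ (p ^ s - 1 - i) := by rw [mul_pow, C_pow]

lemma bp_mem {k : Type*} [Field k] (N : ℕ) (c : k) :
    ((X 0 - C c * X 1 : MvPolynomial (Fin 2) k) ^ (N - 1)) ∈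
      homogeneousSubmodule (Fin 2) k (N - 1) := by
  rw [mem_homogeneousSubmodule]
  simpa using ((isHomogeneous_X k 0).sub (isHomogeneous_C_mul_X c 1)).pow (N - 1)

/-- Let `k` be a field of characteristic `p > 2` and `(ℤ/p)^s` (`s ≥ 1`)
act on `k[X,Y]` with the `i`-th generator fixing `Y` and sending `X` to `X - μᵢY`, with
`μ₁,…,μ_s ∈ k` linearly independent over `𝔽_p`.  Then `S^{p^s-1}(V^#)` is a free module of
rank `1` over `k(ℤ/p)^s`: there is a `k`-linear isomorphism with the regular representation
`k(ℤ/p)^s = ((ℤ/p)^s → k)` (the `i`-th generator acting by translation by the `i`-th basis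
vector) commuting with the action of each generator. -/
theorem top_symmetric_power_free (p : ℕ) [Fact p.Prime] (hp : Odd p)
    (k : Type*) [Field k] [CharP k p] (s : ℕ) (hs : 1 ≤ s) (μ : Fin s → k)
    (hμ : ∀ c : Fin s → ZMod p,
      ∑ i, ZMod.castHom (dvd_refl p) k (c i) * μ i = 0 → c = 0) :
    ∃ e : homogeneousSubmodule (Fin 2) k (p ^ s - 1) ≃ₗ[k] ((Fin s → ZMod p) → k),
      ∀ i : Fin s, ∀ f g : homogeneousSubmodule (Fin 2) k (p ^ s - 1),
        substAct k (μ i) (f : MvPolynomial (Fin 2) k) = (g : MvPolynomial (Fin 2) k) →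
          e g = fun x => e f (x - Pi.single i 1) := by
  classical
  have hN1 : 1 ≤ p ^ s := Nat.one_le_pow _ _ (Fact.out : p.Prime).pos
  -- the scalar `λ(x) = ∑ xᵢ μᵢ`
  set lam : (Fin s → ZMod p) → k :=
    fun x => ∑ i, ZMod.castHom (dvd_refl p) k (x i) * μ i with hlam_def
  have hlam_inj : Function.Injective lam := by
    intro x y hxy
    have h0 : ∑ i, ZMod.castHom (dvd_refl p) k ((x - y) i) * μ i = 0 := by
      have hterm : ∀ i : Fin s, ZMod.castHom (dvd_refl p) k ((x - y) i) * μ i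
          = ZMod.castHom (dvd_refl p) k (x i) * μ i
            - ZMod.castHom (dvd_refl p) k (y i) * μ i := by
        intro i; rw [Pi.sub_apply, map_sub, sub_mul]
      rw [Finset.sum_congr rfl fun i _ => hterm i, Finset.sum_sub_distrib]
      exact sub_eq_zero.mpr hxy
    exact sub_eq_zero.mp (hμ _ h0)
  have hlam_add : ∀ (i : Fin s) (x : Fin s → ZMod p),
      lam (x + Pi.single i 1) = lam x + μ i := by
    intro i x
    have hterm : ∀ j : Fin s, ZMod.castHom (dvd_refl p) k ((x + Pi.single i 1 : Fin s → ZMod p) j) * μ j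
        = ZMod.castHom (dvd_refl p) k (x j) * μ j
          + ZMod.castHom (dvd_refl p) k ((Pi.single i 1 : Fin s → ZMod p) j) * μ j := by
      intro j; rw [Pi.add_apply, map_add, add_mul]
    show ∑ j, ZMod.castHom (dvd_refl p) k ((x + Pi.single i 1 : Fin s → ZMod p) j) * μ j
        = (∑ j, ZMod.castHom (dvd_refl p) k (x j) * μ j) + μ i
    rw [Finset.sum_congr rfl fun j _ => hterm j, Finset.sum_add_distrib]
    congr 1
    rw [Finset.sum_eq_single i]
    · simp
    · intro j _ hj; simp [Pi.single_eq_of_ne hj]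
    · simp
  -- the candidate basis vectors
  set bb : (Fin s → ZMod p) → homogeneousSubmodule (Fin 2) k (p ^ s - 1) :=
    fun x => ⟨(X 0 - C (lam x) * X 1) ^ (p ^ s - 1), bp_mem (p ^ s) (lam x)⟩ with hbb_def
  -- the linear map sending coefficients to combinations of the `bb x`
  set Φg : ((Fin s → ZMod p) → k) →ₗ[k] homogeneousSubmodule (Fin 2) k (p ^ s - 1) :=
    { toFun := fun c => ∑ x : Fin s → ZMod p, c x • bb x
      map_add' := by intro a b; simp [add_smul, Finset.sum_add_distrib]
      map_smul' := by intro m a; simp [Finset.smul_sum, mul_smul] } with hΦg_def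
  -- coefficient extraction
  set cf : homogeneousSubmodule (Fin 2) k (p ^ s - 1) →ₗ[k] (Fin (p ^ s) → k) :=
    LinearMap.pi fun j => (lcoeff k (expMono (p ^ s) (j : ℕ))).comp
      (Submodule.subtype _) with hcf_def
  have hcf_bb : ∀ (x : Fin s → ZMod p) (j : Fin (p ^ s)),
      cf (bb x) j = lam x ^ (p ^ s - 1 - (j : ℕ)) := by
    intro x j
    show coeff (expMono (p ^ s) (j : ℕ)) ((X 0 - C (lam x) * X 1) ^ (p ^ s - 1)) = _
    rw [bp_expand p s (lam x), coeff_sum]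
    rw [Finset.sum_eq_single_of_mem (j : ℕ) (Finset.mem_range.mpr j.isLt)]
    · rw [coeff_monomial, if_pos rfl]
    · intro i _ hij
      rw [coeff_monomial, if_neg]
      intro hcon
      have h0 := DFunLike.congr_fun hcon (0 : Fin 2)
      rw [expMono_apply0, expMono_apply0] at h0
      exact hij h0
  have hcf0 : ∀ f : homogeneousSubmodule (Fin 2) k (p ^ s - 1), cf f = 0 → f = 0 := by
    intro f hf
    have hhom : MvPolynomial.IsHomogeneous (f : MvPolynomial (Fin 2) k) (p ^ s - 1) := f.2
    have key : ∀ d, coeff d (f : MvPolynomial (Fin 2) k) = 0 := by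
      intro d
      by_contra hd
      have hdeg : (Finsupp.weight 1) d = p ^ s - 1 := hhom hd
      have hsum : d 0 + d 1 = p ^ s - 1 := by
        have h1 : d.degree = p ^ s - 1 := by
          rw [Finsupp.degree_eq_weight_one]; exact hdeg
        have h2 : d.degree = d 0 + d 1 := by
          rw [Finsupp.degree_apply,
            Finset.sum_subset (Finset.subset_univ _)
              (fun i _ hi => Finsupp.notMem_support_iff.mp hi)]
          exact Fin.sum_univ_two d
        omega
      have hd0 : d 0 < p ^ s := by omega
      have hdeq : d = expMono (p ^ s) (d 0) := by
        ext j
        fin_cases j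
        · show d 0 = expMono (p ^ s) (d 0) 0
          rw [expMono_apply0]
        · show d 1 = expMono (p ^ s) (d 0) 1
          rw [expMono_apply1]; omega
      have hzero := congrFun hf ⟨d 0, hd0⟩
      rw [hdeq] at hd
      exact hd (by simpa [hcf_def] using hzero)
    apply Subtype.ext
    exact MvPolynomial.ext _ _ fun d => by simp [key d]
  have hcf_inj : ∀ f g : homogeneousSubmodule (Fin 2) k (p ^ s - 1),
      cf f = cf g → f = g := by
    intro f g h
    have : cf (f - g) = 0 := by rw [map_sub, h, sub_self]
    have := hcf0 _ this
    rwa [sub_eq_zero] at this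
  -- reindexing equivalence and the Vandermonde matrix
  have hcard : Fintype.card (Fin s → ZMod p) = p ^ s := by
    simp [Fintype.card_fun, ZMod.card]
  set ι : Fin (p ^ s) ≃ (Fin s → ZMod p) := (Fintype.equivFinOfCardEq hcard).symm
    with hι_def
  set v : Fin (p ^ s) → k := fun i => lam (ι i) with hv_def
  have hv_inj : Function.Injective v := fun a b h => ι.injective (hlam_inj h)
  set W : Matrix (Fin (p ^ s)) (Fin (p ^ s)) k :=
    Matrix.of fun j i => v i ^ (p ^ s - 1 - (j : ℕ)) with hW_def
  have hdetW : W.det ≠ 0 := by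
    have h1 : W = Matrix.transpose ((Matrix.vandermonde v).submatrix id Fin.revPerm) := by
      ext j i
      simp [hW_def, Matrix.vandermonde, Fin.rev]
      congr 1
      omega
    rw [h1, Matrix.det_transpose, Matrix.det_permute']
    have h2 : (Matrix.vandermonde v).det ≠ 0 :=
      Matrix.det_vandermonde_ne_zero_iff.mpr hv_inj
    rcases Int.units_eq_one_or (Equiv.Perm.sign (Fin.revPerm (n := p ^ s))) with h | h <;>
      rw [h] <;> simpa using h2
  have hW_unit : IsUnit W.det := isUnit_iff_ne_zero.mpr hdetW
  have hWmul : ∀ c : (Fin s → ZMod p) → k, cf (Φg c) = W.mulVec (c ∘ ι) := by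
    intro c
    funext j
    calc cf (Φg c) j
        = ∑ x : Fin s → ZMod p, c x * lam x ^ (p ^ s - 1 - (j : ℕ)) := by
          show cf (∑ x : Fin s → ZMod p, c x • bb x) j = _
          rw [map_sum, Finset.sum_apply]
          refine Finset.sum_congr rfl fun x _ => ?_
          rw [map_smul, Pi.smul_apply, hcf_bb x j, smul_eq_mul]
      _ = ∑ i : Fin (p ^ s), c (ι i) * lam (ι i) ^ (p ^ s - 1 - (j : ℕ)) :=
          (Equiv.sum_comp ι _).symm
      _ = W.mulVec (c ∘ ι) j := by
          simp [hW_def, Matrix.mulVec, dotProduct, hv_def, mul_comm]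
  have hΦ_inj : Function.Injective Φg := by
    intro a b hab
    have h1 : W.mulVec (a ∘ ι) = W.mulVec (b ∘ ι) := by
      rw [← hWmul, ← hWmul, hab]
    have h2 : a ∘ ι = b ∘ ι := by
      have h3 := congrArg W⁻¹.mulVec h1
      rwa [Matrix.mulVec_mulVec, Matrix.mulVec_mulVec,
        Matrix.nonsing_inv_mul _ hW_unit, Matrix.one_mulVec, Matrix.one_mulVec] at h3
    funext x
    have := congrFun h2 (ι.symm x)
    simpa using this
  have hΦ_surj : Function.Surjective Φg := by
    intro f
    refine ⟨(W⁻¹.mulVec (cf f)) ∘ ι.symm, hcf_inj _ _ ?_⟩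
    rw [hWmul]
    have hcomp : ((W⁻¹.mulVec (cf f)) ∘ ι.symm) ∘ ι = W⁻¹.mulVec (cf f) := by
      funext i; simp
    rw [hcomp, Matrix.mulVec_mulVec, Matrix.mul_nonsing_inv _ hW_unit,
      Matrix.one_mulVec]
  refine ⟨(LinearEquiv.ofBijective Φg ⟨hΦ_inj, hΦ_surj⟩).symm, ?_⟩
  set e := (LinearEquiv.ofBijective Φg ⟨hΦ_inj, hΦ_surj⟩).symm with he_def
  intro i f g hfg
  -- action on the basis vectors
  have hbb_subst : ∀ x : Fin s → ZMod p,
      substAct k (μ i) ((bb x : MvPolynomial (Fin 2) k))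
        = ((bb (x + Pi.single i 1) : MvPolynomial (Fin 2) k)) := by
    intro x
    show substAct k (μ i) ((X 0 - C (lam x) * X 1) ^ (p ^ s - 1))
      = (X 0 - C (lam (x + Pi.single i 1)) * X 1) ^ (p ^ s - 1)
    have h1 : substAct k (μ i) (X 0 - C (lam x) * X 1)
        = X 0 - C (lam x + μ i) * X 1 := by
      simp only [substAct, map_sub, map_mul, aeval_X, aeval_C, algebraMap_eq, map_add]
      norm_num
      ring
    rw [map_pow, h1, hlam_add]
  -- expand `f` in terms of the basis
  have hf_sum : (f : MvPolynomial (Fin 2) k)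
      = ∑ x : Fin s → ZMod p, e f x • ((bb x : MvPolynomial (Fin 2) k)) := by
    have h1 : Φg (e f) = f := by
      rw [he_def]
      exact (LinearEquiv.ofBijective Φg ⟨hΦ_inj, hΦ_surj⟩).apply_symm_apply f
    conv_lhs => rw [← h1]
    show ((∑ x : Fin s → ZMod p, e f x • bb x : homogeneousSubmodule (Fin 2) k (p ^ s - 1))
      : MvPolynomial (Fin 2) k) = _
    push_cast [AddSubmonoidClass.coe_finset_sum]
    rfl
  have hg_eq : g = Φg (fun y => e f (y - Pi.single i 1)) := by
    apply Subtype.ext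
    have hval : ((Φg (fun y => e f (y - Pi.single i 1))
        : homogeneousSubmodule (Fin 2) k (p ^ s - 1)) : MvPolynomial (Fin 2) k)
        = ∑ y : Fin s → ZMod p,
            e f (y - Pi.single i 1) • ((bb y : MvPolynomial (Fin 2) k)) := by
      show ((∑ y : Fin s → ZMod p, e f (y - Pi.single i 1) • bb y
        : homogeneousSubmodule (Fin 2) k (p ^ s - 1)) : MvPolynomial (Fin 2) k) = _
      push_cast [AddSubmonoidClass.coe_finset_sum]
      rfl
    rw [hval, ← hfg, hf_sum, map_sum]
    have hterm : ∀ x : Fin s → ZMod p,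
        substAct k (μ i) (e f x • ((bb x : MvPolynomial (Fin 2) k)))
          = e f x • ((bb (x + Pi.single i 1) : MvPolynomial (Fin 2) k)) := by
      intro x
      rw [smul_eq_C_mul, map_mul, ← hbb_subst x, smul_eq_C_mul]
      congr 1
      simp [substAct, algebraMap_eq]
    rw [Finset.sum_congr rfl fun x _ => hterm x]
    refine Fintype.sum_equiv (Equiv.addRight (Pi.single i 1)) _ _ fun x => ?_
    simp
  rw [hg_eq]
  rw [he_def]
  exact (LinearEquiv.ofBijective Φg ⟨hΦ_inj, hΦ_surj⟩).symm_apply_apply _
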